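/- Let v(y) = ∏_{i=1}^n (y + k_i)^{a_i} − κ·y and w(y) = β·∏_{i=1}^n (y + k_i)^{b_i} with all k_i > 0, κ, β > 0, natural numbers a_i < b_i for all i, and suppose (i) v(0) > w(0), (ii) v'(0) < 0, (iii) v' has a (unique) positive root ξ with v(ξ) < w(ξ), and (iv) there exists σ > ξ with v(σ) > w(σ). Then v − w has exactly three roots in (0, ∞), one in each of the intervals (0, ξ), (ξ, σ), (σ, ∞). -/

import Mathlib

open Polynomial

open Finset

/-- nonneg coefficients, downward-closed support, log-concavity (ratio form). -/
def GoodCoeffs (p : ℝ[X]) : Prop :=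
  (∀ j, 0 ≤ p.coeff j) ∧ (∀ j, p.coeff j = 0 → p.coeff (j+1) = 0) ∧
  (∀ m l, m ≤ l → p.coeff (l+1) * p.coeff m ≤ p.coeff (m+1) * p.coeff l)

lemma lin_coeff_zero (k : ℝ) (p : ℝ[X]) : ((X + C k) * p).coeff 0 = k * p.coeff 0 := by
  rw [Polynomial.mul_coeff_zero]; simp

lemma lin_coeff_succ (k : ℝ) (p : ℝ[X]) (j : ℕ) :
    ((X + C k) * p).coeff (j+1) = p.coeff j + k * p.coeff (j+1) := by
  rw [add_mul, coeff_add, coeff_X_mul, coeff_C_mul]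

lemma good_zero_of_le {p : ℝ[X]} (hp : GoodCoeffs p) {m l : ℕ} (hml : m ≤ l)
    (h : p.coeff m = 0) : p.coeff l = 0 := by
  induction l, hml using Nat.le_induction with
  | base => exact h
  | succ l hml ih => exact hp.2.1 l ih

lemma good_one : GoodCoeffs 1 := by
  refine ⟨fun j => ?_, fun j h => ?_, fun m l hml => ?_⟩
  · simp [coeff_one]; positivity
  · simp [coeff_one]
  · have : (1 : ℝ[X]).coeff (l+1) = 0 := by simp [coeff_one]
    rw [this, zero_mul]
    apply mul_nonneg <;> simp [coeff_one] <;> positivity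

lemma good_step {k : ℝ} (hk : 0 < k) {p : ℝ[X]} (hp : GoodCoeffs p) :
    GoodCoeffs ((X + C k) * p) := by
  obtain ⟨h0, hdc, hlc⟩ := hp
  refine ⟨fun j => ?_, fun j h => ?_, fun m l hml => ?_⟩
  · cases j with
    | zero => rw [lin_coeff_zero]; exact mul_nonneg hk.le (h0 0)
    | succ j => rw [lin_coeff_succ]; exact add_nonneg (h0 j) (mul_nonneg hk.le (h0 (j+1)))
  · cases j with
    | zero =>
      rw [lin_coeff_zero] at h
      have hp0 : p.coeff 0 = 0 := by
        rcases mul_eq_zero.1 h with h' | h'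
        · exact absurd h' hk.ne'
        · exact h'
      rw [lin_coeff_succ, hp0, hdc 0 hp0, mul_zero, add_zero]
    | succ j =>
      rw [lin_coeff_succ] at h
      have h1 : p.coeff j = 0 ∧ p.coeff (j+1) = 0 := by
        constructor <;> nlinarith [h0 j, h0 (j+1), mul_nonneg hk.le (h0 (j+1))]
      rw [lin_coeff_succ, h1.2, hdc (j+1) h1.2, mul_zero, add_zero]
  · rcases eq_or_lt_of_le hml with rfl | hlt
    · exact le_refl _
    · cases m with
      | zero =>
        obtain ⟨l', rfl⟩ : ∃ l', l = l' + 1 := ⟨l - 1, by omega⟩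
        rw [lin_coeff_zero, lin_coeff_succ, lin_coeff_succ, lin_coeff_succ]
        have ha := hlc 0 (l'+1) (by omega)
        nlinarith [mul_le_mul_of_nonneg_left ha (sq_nonneg k), mul_nonneg (h0 0) (h0 l'),
          mul_nonneg (mul_nonneg hk.le (h0 1)) (h0 l'), h0 0, h0 1, h0 l', h0 (l'+1), h0 (l'+2)]
      | succ m' =>
        obtain ⟨l', rfl⟩ : ∃ l', l = l' + 1 := ⟨l - 1, by omega⟩
        have hml' : m' < l' := by omega
        rw [lin_coeff_succ, lin_coeff_succ, lin_coeff_succ, lin_coeff_succ]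
        have ha := hlc m' l' hml'.le
        have hb := hlc (m'+1) (l'+1) (by omega)
        have hc1 := hlc m' (l'+1) (by omega)
        have hc2 := hlc (m'+1) l' hml'
        have hcc : p.coeff (l'+2) * p.coeff m' ≤ p.coeff (m'+2) * p.coeff l' := by
          calc p.coeff (l'+2) * p.coeff m' ≤ p.coeff (m'+1) * p.coeff (l'+1) := hc1
          _ = p.coeff (l'+1) * p.coeff (m'+1) := mul_comm _ _
          _ ≤ p.coeff (m'+2) * p.coeff l' := hc2
        nlinarith [mul_le_mul_of_nonneg_left hcc hk.le,
          mul_le_mul_of_nonneg_left hb (sq_nonneg k), ha]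

lemma good_pow_mul {k : ℝ} (hk : 0 < k) {p : ℝ[X]} (hp : GoodCoeffs p) (e : ℕ) :
    GoodCoeffs ((X + C k) ^ e * p) := by
  induction e with
  | zero => simpa using hp
  | succ e ih =>
    have : (X + C k) ^ (e+1) * p = (X + C k) * ((X + C k) ^ e * p) := by ring
    rw [this]; exact good_step hk ih

lemma good_prod {n : ℕ} (k : Fin n → ℝ) (hk : ∀ i, 0 < k i) (e : Fin n → ℕ)
    (s : Finset (Fin n)) : GoodCoeffs (∏ i ∈ s, (X + C (k i)) ^ e i) := by
  induction s using Finset.induction_on with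
  | empty => simpa using good_one
  | @insert i s hni ih =>
    rw [Finset.prod_insert hni]
    exact good_pow_mul (hk i) ih _

/-- cross inequality between coefficients of p and q -/
def CrossLe (p q : ℝ[X]) : Prop :=
  ∀ m l, m ≤ l → p.coeff l * q.coeff m ≤ p.coeff m * q.coeff l

lemma cross_refl (p : ℝ[X]) : CrossLe p p := fun m l _ => le_of_eq (mul_comm _ _)

lemma cross_shift {p q : ℝ[X]} (hp : GoodCoeffs p) (hq : ∀ j, 0 ≤ q.coeff j)
    (hc : CrossLe p q) {m l : ℕ} (hml : m ≤ l) :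
    p.coeff (l+1) * q.coeff m ≤ p.coeff (m+1) * q.coeff l := by
  rcases eq_or_lt_of_le (hp.1 m) with hm0 | hm0
  · have : p.coeff (l+1) = 0 := good_zero_of_le hp (by omega) hm0.symm
    rw [this, zero_mul]
    exact mul_nonneg (hp.1 _) (hq _)
  · have h1 := hp.2.2 m l hml
    have h2 := hc m l hml
    have key : (p.coeff (l+1) * q.coeff m) * p.coeff m ≤ (p.coeff (m+1) * q.coeff l) * p.coeff m := by
      nlinarith [mul_le_mul_of_nonneg_right h1 (hq m), mul_le_mul_of_nonneg_left h2 (hp.1 (m+1))]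
    exact le_of_mul_le_mul_right key hm0

lemma cross_step {p q : ℝ[X]} {k : ℝ} (hk : 0 < k) (hp : GoodCoeffs p)
    (hq : ∀ j, 0 ≤ q.coeff j) (hc : CrossLe p q) : CrossLe p ((X + C k) * q) := by
  intro m l hml
  cases m with
  | zero =>
    cases l with
    | zero => exact le_refl _
    | succ l' =>
      rw [lin_coeff_zero, lin_coeff_succ]
      have := hc 0 (l'+1) (by omega)
      nlinarith [mul_le_mul_of_nonneg_left this hk.le, mul_nonneg (hp.1 0) (hq l')]
  | succ m' =>
    obtain ⟨l', rfl⟩ : ∃ l', l = l' + 1 := ⟨l - 1, by omega⟩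
    have hml' : m' ≤ l' := by omega
    rw [lin_coeff_succ, lin_coeff_succ]
    have h1 := cross_shift hp hq hc hml'
    have h2 := hc (m'+1) (l'+1) (by omega)
    nlinarith [mul_le_mul_of_nonneg_left h2 hk.le]

lemma cross_nonneg_step {q : ℝ[X]} {k : ℝ} (hk : 0 < k) (hq : ∀ j, 0 ≤ q.coeff j) :
    ∀ j, 0 ≤ ((X + C k) * q).coeff j := by
  intro j
  cases j with
  | zero => rw [lin_coeff_zero]; exact mul_nonneg hk.le (hq 0)
  | succ j => rw [lin_coeff_succ]; exact add_nonneg (hq j) (mul_nonneg hk.le (hq (j+1)))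

lemma cross_pow {p q : ℝ[X]} {k : ℝ} (hk : 0 < k) (hp : GoodCoeffs p)
    (hq : ∀ j, 0 ≤ q.coeff j) (hc : CrossLe p q) (e : ℕ) :
    CrossLe p ((X + C k) ^ e * q) ∧ (∀ j, 0 ≤ ((X + C k) ^ e * q).coeff j) := by
  induction e with
  | zero => simpa using ⟨hc, hq⟩
  | succ e ih =>
    have heq : (X + C k) ^ (e+1) * q = (X + C k) * ((X + C k) ^ e * q) := by ring
    rw [heq]
    exact ⟨cross_step hk hp ih.2 ih.1, cross_nonneg_step hk ih.2⟩

lemma cross_prod {n : ℕ} (k : Fin n → ℝ) (hk : ∀ i, 0 < k i) (c : Fin n → ℕ)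
    {p : ℝ[X]} (hp : GoodCoeffs p) (s : Finset (Fin n)) :
    CrossLe p ((∏ i ∈ s, (X + C (k i)) ^ c i) * p) ∧
      (∀ j, 0 ≤ ((∏ i ∈ s, (X + C (k i)) ^ c i) * p).coeff j) := by
  induction s using Finset.induction_on with
  | empty => simpa using ⟨cross_refl p, hp.1⟩
  | @insert i s hni ih =>
    have heq : (∏ j ∈ insert i s, (X + C (k j)) ^ c j) * p
        = (X + C (k i)) ^ c i * ((∏ j ∈ s, (X + C (k j)) ^ c j) * p) := by
      rw [Finset.prod_insert hni, mul_assoc]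
    rw [heq]
    exact cross_pow (hk i) hp ih.2 ih.1 _

lemma mul_nonneg_of_nonpos_nonpos' {a b : ℝ} (ha : a ≤ 0) (hb : b ≤ 0) : 0 ≤ a * b := by
  nlinarith

lemma pow_cross_le {x y : ℝ} (hx : 0 < x) (hxy : x < y) {m l : ℕ} (hml : m ≤ l) :
    x ^ l * y ^ m ≤ x ^ m * y ^ l := by
  obtain ⟨e, rfl⟩ := Nat.exists_eq_add_of_le hml
  have h1 : x ^ e ≤ y ^ e := pow_le_pow_left₀ hx.le hxy.le e
  have h2 : (0:ℝ) < x ^ m := pow_pos hx m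
  have h3 : (0:ℝ) < y ^ m := pow_pos (hx.trans hxy) m
  calc x ^ (m+e) * y ^ m = (x ^ m * y ^ m) * x ^ e := by ring
  _ ≤ (x ^ m * y ^ m) * y ^ e := by
        apply mul_le_mul_of_nonneg_left h1 (by positivity)
  _ = x ^ m * y ^ (m+e) := by ring

lemma pow_cross_lt {x y : ℝ} (hx : 0 < x) (hxy : x < y) {m l : ℕ} (hml : m < l) :
    x ^ l * y ^ m < x ^ m * y ^ l := by
  obtain ⟨e, rfl⟩ := Nat.exists_eq_add_of_le hml.le
  have he : e ≠ 0 := by omega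
  have h1 : x ^ e < y ^ e := pow_lt_pow_left₀ hxy hx.le he
  have h2 : (0:ℝ) < x ^ m := pow_pos hx m
  have h3 : (0:ℝ) < y ^ m := pow_pos (hx.trans hxy) m
  calc x ^ (m+e) * y ^ m = (x ^ m * y ^ m) * x ^ e := by ring
  _ < (x ^ m * y ^ m) * y ^ e := by
        apply mul_lt_mul_of_pos_left h1 (by positivity)
  _ = x ^ m * y ^ (m+e) := by ring

lemma two_point (P Q : ℝ[X]) (N : ℕ) (hPd : P.natDegree < N) (hQd : Q.natDegree < N)
    (hc : ∀ m l, m ≤ l → P.coeff l * Q.coeff m ≤ P.coeff m * Q.coeff l)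
    (m₀ l₀ : ℕ) (hm₀ : m₀ < l₀) (hl₀ : l₀ < N)
    (hstrict : P.coeff l₀ * Q.coeff m₀ < P.coeff m₀ * Q.coeff l₀)
    {x y : ℝ} (hx : 0 < x) (hxy : x < y) :
    P.eval y * Q.eval x < P.eval x * Q.eval y := by
  set F : ℕ → ℕ → ℝ := fun m l =>
    (P.coeff m * Q.coeff l - P.coeff l * Q.coeff m) * (x ^ m * y ^ l - x ^ l * y ^ m) with hF
  have hT : ∑ m ∈ range N, ∑ l ∈ range N, F m l
      = 2 * (P.eval x * Q.eval y - P.eval y * Q.eval x) := by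
    have e1 : P.eval x * Q.eval y
        = ∑ m ∈ range N, ∑ l ∈ range N, (P.coeff m * x ^ m) * (Q.coeff l * y ^ l) := by
      rw [eval_eq_sum_range' hPd, eval_eq_sum_range' hQd, Finset.sum_mul_sum]
    have e2 : P.eval y * Q.eval x
        = ∑ m ∈ range N, ∑ l ∈ range N, (P.coeff m * y ^ m) * (Q.coeff l * x ^ l) := by
      rw [eval_eq_sum_range' hPd, eval_eq_sum_range' hQd, Finset.sum_mul_sum]
    have e3 : P.eval y * Q.eval x
        = ∑ m ∈ range N, ∑ l ∈ range N, (P.coeff l * y ^ l) * (Q.coeff m * x ^ m) := by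
      rw [e2, Finset.sum_comm]
    have e4 : P.eval x * Q.eval y
        = ∑ m ∈ range N, ∑ l ∈ range N, (P.coeff l * x ^ l) * (Q.coeff m * y ^ m) := by
      rw [e1, Finset.sum_comm]
    have expand : ∀ m ∈ range N, ∀ l ∈ range N, True := fun _ _ _ _ => trivial
    calc ∑ m ∈ range N, ∑ l ∈ range N, F m l
        = ∑ m ∈ range N, ∑ l ∈ range N,
            ((P.coeff m * x ^ m) * (Q.coeff l * y ^ l)
            - (P.coeff m * y ^ m) * (Q.coeff l * x ^ l)
            - (P.coeff l * y ^ l) * (Q.coeff m * x ^ m)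
            + (P.coeff l * x ^ l) * (Q.coeff m * y ^ m)) := by
          apply Finset.sum_congr rfl; intro m _
          apply Finset.sum_congr rfl; intro l _
          rw [hF]; ring
      _ = 2 * (P.eval x * Q.eval y - P.eval y * Q.eval x) := by
          simp only [Finset.sum_add_distrib, Finset.sum_sub_distrib]
          rw [← e1, ← e2, ← e3, ← e4]; ring
  have hpos : 0 < ∑ m ∈ range N, ∑ l ∈ range N, F m l := by
    apply Finset.sum_pos'
    · intro m _
      apply Finset.sum_nonneg
      intro l _
      rcases le_or_gt m l with hml | hlm
      · exact mul_nonneg (sub_nonneg.2 (hc m l hml)) (sub_nonneg.2 (pow_cross_le hx hxy hml))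
      · exact mul_nonneg_of_nonpos_nonpos' (sub_nonpos.2 (hc l m hlm.le))
          (sub_nonpos.2 (pow_cross_le hx hxy hlm.le))
    · refine ⟨m₀, Finset.mem_range.2 (by omega), ?_⟩
      apply Finset.sum_pos'
      · intro l _
        rcases le_or_gt m₀ l with hml | hlm
        · exact mul_nonneg (sub_nonneg.2 (hc m₀ l hml)) (sub_nonneg.2 (pow_cross_le hx hxy hml))
        · exact mul_nonneg_of_nonpos_nonpos' (sub_nonpos.2 (hc l m₀ hlm.le))
            (sub_nonpos.2 (pow_cross_le hx hxy hlm.le))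
      · refine ⟨l₀, Finset.mem_range.2 hl₀, ?_⟩
        exact mul_pos (sub_pos.2 hstrict) (sub_pos.2 (pow_cross_lt hx hxy hm₀))
  linarith [hT ▸ hpos]

lemma rolle_poly (g : ℝ[X]) {c d : ℝ} (hcd : c < d) (h1 : g.eval c = 0) (h2 : g.eval d = 0) :
    ∃ z, c < z ∧ z < d ∧ (derivative g).eval z = 0 := by
  obtain ⟨z, hz, hz0⟩ := exists_deriv_eq_zero (f := fun x => g.eval x) hcd
    (g.continuous.continuousOn) (by show g.eval c = g.eval d; rw [h1, h2])
  exact ⟨z, hz.1, hz.2, by rw [← Polynomial.deriv]; exact hz0⟩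

set_option maxHeartbeats 2000000 in
theorem stmt17 (n : ℕ) (k : Fin n → ℝ) (hk : ∀ i, 0 < k i)
    (a b : Fin n → ℕ) (hab : ∀ i, a i < b i)
    (κ β : ℝ) (hκ : 0 < κ) (hβ : 0 < β)
    (v w : ℝ[X])
    (hv : v = (∏ i, (X + C (k i)) ^ a i) - C κ * X)
    (hw : w = C β * ∏ i, (X + C (k i)) ^ b i)
    (h0 : w.eval 0 < v.eval 0)
    (hd0 : (derivative v).eval 0 < 0)
    (ξ : ℝ) (hξpos : 0 < ξ) (hξ : (derivative v).eval ξ = 0)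
    (hξu : ∀ z : ℝ, 0 < z → (derivative v).eval z = 0 → z = ξ)
    (hvw : v.eval ξ < w.eval ξ)
    (σ : ℝ) (hσ : ξ < σ) (hvwσ : w.eval σ < v.eval σ) :
    (∃! y, y ∈ Set.Ioo 0 ξ ∧ v.eval y = w.eval y) ∧
    (∃! y, y ∈ Set.Ioo ξ σ ∧ v.eval y = w.eval y) ∧
    (∃! y, y ∈ Set.Ioi σ ∧ v.eval y = w.eval y) := by
  classical
  set p : ℝ[X] := ∏ i, (X + C (k i)) ^ a i with hp
  set q : ℝ[X] := ∏ i, (X + C (k i)) ^ b i with hq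
  set A : ℕ := ∑ i, a i with hA
  set B : ℕ := ∑ i, b i with hB
  have hpm : p.Monic := monic_prod_of_monic _ _ (fun i _ => (monic_X_add_C (k i)).pow _)
  have hqm : q.Monic := monic_prod_of_monic _ _ (fun i _ => (monic_X_add_C (k i)).pow _)
  have hpd : p.natDegree = A := by
    rw [hp, natDegree_prod _ _ (fun i _ => pow_ne_zero _ (X_add_C_ne_zero (k i)))]
    simp [natDegree_pow, natDegree_X_add_C, hA]
  have hqd : q.natDegree = B := by
    rw [hq, natDegree_prod _ _ (fun i _ => pow_ne_zero _ (X_add_C_ne_zero (k i)))]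
    simp [natDegree_pow, natDegree_X_add_C, hB]
  have hdv : derivative v = derivative p - C κ := by
    rw [hv]
    simp [derivative_sub, derivative_C_mul, derivative_X]
  -- A ≥ 2
  have hA2 : 2 ≤ A := by
    by_contra hcon
    have h1 : p.natDegree ≤ 1 := by omega
    have h2 : (derivative p).natDegree = 0 :=
      le_antisymm (le_trans (natDegree_derivative_le p) (by omega)) (Nat.zero_le _)
    obtain ⟨c, hc⟩ := Polynomial.natDegree_eq_zero.1 h2
    have hev : ∀ z : ℝ, (derivative v).eval z = c - κ := by
      intro z; rw [hdv, ← hc]; simp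
    rw [hev 0] at hd0
    rw [hev ξ] at hξ
    linarith
  have hne : (univ : Finset (Fin n)).Nonempty := by
    by_contra hcon
    rw [Finset.not_nonempty_iff_eq_empty] at hcon
    have : A = 0 := by rw [hA, hcon]; simp
    omega
  have hAB : A < B := Finset.sum_lt_sum_of_nonempty hne (fun i _ => hab i)
  -- cross inequality
  have hgood_p : GoodCoeffs p := good_prod k hk a univ
  have hgood_q : GoodCoeffs q := good_prod k hk b univ
  have hqp : q = (∏ i, (X + C (k i)) ^ (b i - a i)) * p := by
    rw [hq, hp, ← Finset.prod_mul_distrib]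
    apply Finset.prod_congr rfl
    intro i _
    rw [← pow_add, Nat.sub_add_cancel (hab i).le]
  have hcross : CrossLe p q := by
    rw [hqp]; exact (cross_prod k hk _ hgood_p univ).1
  -- second derivatives
  set P : ℝ[X] := derivative (derivative p) with hPdef
  set Q : ℝ[X] := derivative (derivative q) with hQdef
  have hPc : ∀ j, P.coeff j = p.coeff (j+2) * (((j:ℝ)+2) * ((j:ℝ)+1)) := by
    intro j
    rw [hPdef, coeff_derivative, coeff_derivative]
    push_cast; ring
  have hQc : ∀ j, Q.coeff j = q.coeff (j+2) * (((j:ℝ)+2) * ((j:ℝ)+1)) := by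
    intro j
    rw [hQdef, coeff_derivative, coeff_derivative]
    push_cast; ring
  have hcPQ : ∀ m l, m ≤ l → P.coeff l * Q.coeff m ≤ P.coeff m * Q.coeff l := by
    intro m l hml
    rw [hPc, hPc, hQc, hQc]
    have key := hcross (m+2) (l+2) (by omega)
    have c0 : (0:ℝ) ≤ (((m:ℝ)+2) * ((m:ℝ)+1)) * (((l:ℝ)+2) * ((l:ℝ)+1)) := by positivity
    nlinarith [mul_le_mul_of_nonneg_left key c0]
  have hsA : A - 2 + 2 = A := by omega
  have hsB : B - 2 + 2 = B := by omega
  have hpa : p.coeff A = 1 := by rw [← hpd]; exact hpm.coeff_natDegree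
  have hqb : q.coeff B = 1 := by rw [← hqd]; exact hqm.coeff_natDegree
  have hpB : p.coeff B = 0 := coeff_eq_zero_of_natDegree_lt (by omega)
  have hPm0 : 0 < P.coeff (A-2) := by rw [hPc, hsA, hpa]; have : (2:ℝ) ≤ (A:ℝ) := by exact_mod_cast hA2
                                      nlinarith
  have hPl0 : P.coeff (B-2) = 0 := by rw [hPc, hsB, hpB]; ring
  have hQl0 : 0 < Q.coeff (B-2) := by rw [hQc, hsB, hqb]; have : (3:ℝ) ≤ (B:ℝ) := by exact_mod_cast (by omega : 3 ≤ B)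
                                      nlinarith
  have hstrict : P.coeff (B-2) * Q.coeff (A-2) < P.coeff (A-2) * Q.coeff (B-2) := by
    rw [hPl0, zero_mul]; exact mul_pos hPm0 hQl0
  have hPdeg : P.natDegree < B + 1 := by
    have d1 : (derivative p).natDegree ≤ A := le_trans (natDegree_derivative_le p) (by omega)
    have d2 : P.natDegree ≤ A := le_trans (natDegree_derivative_le _) (by omega)
    omega
  have hQdeg : Q.natDegree < B + 1 := by
    have d1 : (derivative q).natDegree ≤ B := le_trans (natDegree_derivative_le q) (by omega)
    have d2 : Q.natDegree ≤ B := le_trans (natDegree_derivative_le _) (by omega)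
    omega
  -- second derivative of v - w
  have hVW2 : derivative (derivative (v - w)) = P - C β * Q := by
    have hvw' : v - w = p - C κ * X - C β * q := by rw [hv, hw]
    rw [hvw']
    simp [derivative_sub, derivative_C_mul, derivative_X, hPdef, hQdef]
  -- four roots impossible
  have four : ∀ y₁ y₂ y₃ y₄ : ℝ, 0 < y₁ → y₁ < y₂ → y₂ < y₃ → y₃ < y₄ →
      v.eval y₁ = w.eval y₁ → v.eval y₂ = w.eval y₂ → v.eval y₃ = w.eval y₃ →
      v.eval y₄ = w.eval y₄ → False := by
    intro y₁ y₂ y₃ y₄ h1 h12 h23 h34 e1 e2 e3 e4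
    have r : ∀ z, v.eval z = w.eval z → (v - w).eval z = 0 := by
      intro z h; rw [eval_sub, h, sub_self]
    obtain ⟨d₁, hd₁a, hd₁b, hd₁0⟩ := rolle_poly (v - w) h12 (r _ e1) (r _ e2)
    obtain ⟨d₂, hd₂a, hd₂b, hd₂0⟩ := rolle_poly (v - w) h23 (r _ e2) (r _ e3)
    obtain ⟨d₃, hd₃a, hd₃b, hd₃0⟩ := rolle_poly (v - w) h34 (r _ e3) (r _ e4)
    obtain ⟨z₁, hz₁a, hz₁b, hz₁0⟩ :=
      rolle_poly (derivative (v - w)) (lt_trans hd₁b hd₂a) hd₁0 hd₂0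
    obtain ⟨z₂, hz₂a, hz₂b, hz₂0⟩ :=
      rolle_poly (derivative (v - w)) (lt_trans hd₂b hd₃a) hd₂0 hd₃0
    have hz1pos : 0 < z₁ := lt_trans (lt_trans h1 hd₁a) hz₁a
    have hz12 : z₁ < z₂ := lt_trans hz₁b hz₂a
    rw [hVW2] at hz₁0 hz₂0
    have hv1 : P.eval z₁ = β * Q.eval z₁ := by
      simp only [eval_sub, eval_mul, eval_C] at hz₁0; linarith
    have hv2 : P.eval z₂ = β * Q.eval z₂ := by
      simp only [eval_sub, eval_mul, eval_C] at hz₂0; linarith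
    have key := two_point P Q (B+1) hPdeg hQdeg hcPQ (A-2) (B-2) (by omega) (by omega)
      hstrict hz1pos hz12
    rw [hv1, hv2] at key
    nlinarith [key]
  -- existence of T with (v-w).eval T < 0
  have hwd : w.natDegree = B := by rw [hw, natDegree_C_mul hβ.ne', hqd]
  have hvd : v.natDegree ≤ A := by
    rw [hv]
    apply le_trans (natDegree_sub_le _ _)
    apply sup_le (le_of_eq hpd)
    rw [natDegree_C_mul hκ.ne', natDegree_X]; omega
  have hcoeffB : (v - w).coeff B = -β := by
    rw [coeff_sub, coeff_eq_zero_of_natDegree_lt (by omega : v.natDegree < B), hw, coeff_C_mul]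
    rw [hqb]; ring
  have hgne : v - w ≠ 0 := by
    intro h; rw [h] at hcoeffB; simp at hcoeffB; linarith
  have hgnd : (v - w).natDegree = B := by
    refine le_antisymm (le_trans (natDegree_sub_le _ _) (sup_le (by omega) (le_of_eq hwd)))
      (le_natDegree_of_ne_zero ?_)
    rw [hcoeffB]; exact neg_ne_zero.2 hβ.ne'
  have hdeg0 : 0 < (v - w).degree := by
    rw [degree_eq_natDegree hgne, hgnd]
    exact_mod_cast (by omega : 0 < B)
  have hlc : (v - w).leadingCoeff ≤ 0 := by
    rw [leadingCoeff, hgnd, hcoeffB]; linarith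
  have htend := tendsto_atBot_of_leadingCoeff_nonpos _ hdeg0 hlc
  obtain ⟨T, hTσ, hTneg⟩ : ∃ T, σ < T ∧ (v - w).eval T < 0 := by
    have h1 := htend.eventually (Filter.eventually_lt_atBot (0:ℝ))
    have h2 := Filter.eventually_gt_atTop σ
    obtain ⟨T, hT1, hT2⟩ := (h2.and h1).exists
    exact ⟨T, hT1, hT2⟩
  -- eval signs
  have g0 : 0 < (v - w).eval 0 := by rw [eval_sub]; linarith
  have gξ : (v - w).eval ξ < 0 := by rw [eval_sub]; linarith
  have gσ : 0 < (v - w).eval σ := by rw [eval_sub]; linarith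
  have conti : ∀ c d : ℝ, ContinuousOn (fun x => (v - w).eval x) (Set.Icc c d) :=
    fun c d => ((v - w).continuous).continuousOn
  -- roots
  have root_of : ∀ z, (v - w).eval z = 0 → v.eval z = w.eval z := by
    intro z h; rw [eval_sub, sub_eq_zero] at h; exact h
  obtain ⟨r₁, hr₁I, hr₁0⟩ : ∃ r ∈ Set.Ioo (0:ℝ) ξ, (v - w).eval r = 0 := by
    have := intermediate_value_Ioo' hξpos.le (conti 0 ξ)
      (by constructor <;> [exact gξ; exact g0] : (0:ℝ) ∈ Set.Ioo ((v-w).eval ξ) ((v-w).eval 0))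
    obtain ⟨r, hrI, hr0⟩ := this
    exact ⟨r, hrI, hr0⟩
  obtain ⟨r₂, hr₂I, hr₂0⟩ : ∃ r ∈ Set.Ioo ξ σ, (v - w).eval r = 0 := by
    have := intermediate_value_Ioo hσ.le (conti ξ σ)
      (by constructor <;> [exact gξ; exact gσ] : (0:ℝ) ∈ Set.Ioo ((v-w).eval ξ) ((v-w).eval σ))
    obtain ⟨r, hrI, hr0⟩ := this
    exact ⟨r, hrI, hr0⟩
  obtain ⟨r₃, hr₃I, hr₃0⟩ : ∃ r ∈ Set.Ioo σ T, (v - w).eval r = 0 := by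
    have := intermediate_value_Ioo' hTσ.le (conti σ T)
      (by constructor <;> [exact hTneg; exact gσ] : (0:ℝ) ∈ Set.Ioo ((v-w).eval T) ((v-w).eval σ))
    obtain ⟨r, hrI, hr0⟩ := this
    exact ⟨r, hrI, hr0⟩
  have er₁ := root_of _ hr₁0
  have er₂ := root_of _ hr₂0
  have er₃ := root_of _ hr₃0
  have hr₃Ioi : r₃ ∈ Set.Ioi σ := hr₃I.1
  constructor
  · refine ⟨r₁, ⟨hr₁I, er₁⟩, ?_⟩
    rintro z ⟨hzI, hze⟩
    by_contra hne
    rcases Ne.lt_or_gt hne with h | h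
    · exact four z r₁ r₂ r₃ hzI.1 h (lt_trans hr₁I.2 hr₂I.1) (lt_trans hr₂I.2 hr₃I.1)
        hze er₁ er₂ er₃
    · exact four r₁ z r₂ r₃ hr₁I.1 h (lt_trans hzI.2 hr₂I.1) (lt_trans hr₂I.2 hr₃I.1)
        er₁ hze er₂ er₃
  constructor
  · refine ⟨r₂, ⟨hr₂I, er₂⟩, ?_⟩
    rintro z ⟨hzI, hze⟩
    by_contra hne
    rcases Ne.lt_or_gt hne with h | h
    · exact four r₁ z r₂ r₃ hr₁I.1 (lt_trans hr₁I.2 hzI.1) h (lt_trans hr₂I.2 hr₃I.1)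
        er₁ hze er₂ er₃
    · exact four r₁ r₂ z r₃ hr₁I.1 (lt_trans hr₁I.2 hr₂I.1) h (lt_trans hzI.2 hr₃I.1)
        er₁ er₂ hze er₃
  · refine ⟨r₃, ⟨hr₃Ioi, er₃⟩, ?_⟩
    rintro z ⟨hzI, hze⟩
    by_contra hne
    rcases Ne.lt_or_gt hne with h | h
    · exact four r₁ r₂ z r₃ hr₁I.1 (lt_trans hr₁I.2 hr₂I.1) (lt_trans hr₂I.2 hzI) h
        er₁ er₂ hze er₃
    · exact four r₁ r₂ r₃ z hr₁I.1 (lt_trans hr₁I.2 hr₂I.1) (lt_trans hr₂I.2 hr₃I.1) h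
        er₁ er₂ er₃ hze
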